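/- Let v be a two-feature linear classifier on [0,1]^2 with weights w_1 > 0 and w_2 < 0 and threshold q satisfying the non-degeneracy condition w_2 < q < w_1. Then χ_1 > χ_2 if and only if |w_1| > |w_2|. -/

import Mathlib

open MeasureTheory Set

set_option maxHeartbeats 1000000

/-- The linear classifier on ℝ^n with weights w and threshold q. -/
noncomputable def linClass {n : ℕ} (w : Fin n → ℝ) (q : ℝ) (x : Fin n → ℝ) : ℝ :=
  if q ≤ ∑ k, w k * x k then 1 else 0

/-- The unit cube [0,1]^n. -/
def unitCube (n : ℕ) : Set (Fin n → ℝ) := Set.univ.pi fun _ => Set.Icc 0 1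

/-- The influence χ_i = ∫_0^1 ∫_{[0,1]^n} |v(x_{-i}, b) − v(x)| dx db. -/
noncomputable def chiLin {n : ℕ} (w : Fin n → ℝ) (q : ℝ) (i : Fin n) : ℝ :=
  ∫ b in Set.Icc (0 : ℝ) 1,
    ∫ x in unitCube n, |linClass w q (Function.update x i b) - linClass w q x|



noncomputable def clamp (x : ℝ) : ℝ := min 1 (max 0 x)

lemma clamp_nonneg (x : ℝ) : 0 ≤ clamp x := le_min zero_le_one (le_max_left 0 x)
lemma clamp_le_one (x : ℝ) : clamp x ≤ 1 := min_le_left _ _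

lemma clamp_of_nonpos {x : ℝ} (h : x ≤ 0) : clamp x = 0 := by
  simp [clamp, max_eq_left h, min_eq_right zero_le_one]

lemma clamp_of_mem {x : ℝ} (h0 : 0 ≤ x) (h1 : x ≤ 1) : clamp x = x := by
  simp [clamp, max_eq_right h0, min_eq_right h1]

lemma clamp_of_one_le {x : ℝ} (h : 1 ≤ x) : clamp x = 1 := by
  have h0 : (0:ℝ) ≤ x := le_trans zero_le_one h
  simp [clamp, max_eq_right h0, min_eq_left h]

lemma continuous_clamp : Continuous clamp :=
  continuous_const.min (continuous_const.max continuous_id)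

noncomputable def Gg (x : ℝ) : ℝ := (clamp x)^2 - 2/3 * (clamp x)^3

lemma hasDerivAt_Gg (x : ℝ) : HasDerivAt Gg (2 * clamp x * (1 - clamp x)) x := by
  rcases lt_trichotomy x 0 with hx | rfl | hx
  · have hev : (fun _ : ℝ => (0:ℝ)) =ᶠ[nhds x] Gg := by
      filter_upwards [Iio_mem_nhds hx] with y hy
      simp [Gg, clamp_of_nonpos (le_of_lt hy)]
    rw [clamp_of_nonpos hx.le]
    simpa using (hasDerivAt_const x (0:ℝ)).congr_of_eventuallyEq hev.symm
  · -- kink at 0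
    rw [show clamp 0 = 0 from clamp_of_nonpos le_rfl]
    rw [hasDerivAt_iff_isLittleO]
    simp only [sub_zero, smul_zero, Gg, show clamp 0 = 0 from clamp_of_nonpos le_rfl]
    norm_num
    rw [Asymptotics.isLittleO_iff]
    intro ε hε
    filter_upwards [Metric.ball_mem_nhds (0:ℝ) hε] with y hy
    have hy' : |y| < ε := by simpa [Real.dist_eq] using hy
    have h0 : 0 ≤ clamp y := clamp_nonneg y
    have h1 : clamp y ≤ 1 := clamp_le_one y
    have h2 : clamp y ≤ |y| := by
      rcases le_total y 0 with h | h
      · rw [clamp_of_nonpos h]; exact abs_nonneg y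
      · exact le_trans (min_le_right _ _) (le_trans (max_le (abs_nonneg y) (le_abs_self y)) le_rfl)
    have hGnn : 0 ≤ clamp y ^ 2 - 2/3 * clamp y ^ 3 := by nlinarith
    rw [Real.norm_eq_abs, Real.norm_eq_abs, abs_of_nonneg hGnn]
    nlinarith [abs_nonneg y]
  · rcases lt_trichotomy x 1 with hx1 | rfl | hx1
    · have hev : (fun y : ℝ => y^2 - 2/3*y^3) =ᶠ[nhds x] Gg := by
        filter_upwards [Ioo_mem_nhds hx hx1] with y hy
        simp [Gg, clamp_of_mem hy.1.le hy.2.le]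
      have hd : HasDerivAt (fun y : ℝ => y^2 - 2/3*y^3) (2*x - 2/3*(3*x^2)) x := by
        exact ((hasDerivAt_pow 2 x).sub ((hasDerivAt_pow 3 x).const_mul (2/3 : ℝ))).congr_deriv (by norm_num)
      rw [clamp_of_mem hx.le hx1.le]
      have := hd.congr_of_eventuallyEq hev.symm
      exact this.congr_deriv (by ring)
    · -- kink at 1
      rw [show clamp 1 = 1 from clamp_of_one_le le_rfl]
      rw [hasDerivAt_iff_isLittleO]
      have hG1 : Gg 1 = 1/3 := by
        simp [Gg, show clamp 1 = 1 from clamp_of_one_le le_rfl]; norm_num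
      rw [Asymptotics.isLittleO_iff]
      intro ε hε
      filter_upwards [Metric.ball_mem_nhds (1:ℝ) hε] with y hy
      have hy' : |y - 1| < ε := by simpa [Real.dist_eq] using hy
      have h0 : 0 ≤ clamp y := clamp_nonneg y
      have h1 : clamp y ≤ 1 := clamp_le_one y
      have h2 : 1 - clamp y ≤ |y - 1| := by
        rcases le_total 1 y with h | h
        · rw [clamp_of_one_le h]; simpa using abs_nonneg (y-1)
        · have : y ≤ clamp y ∨ 0 ≤ clamp y := by
            rcases le_total y 0 with h' | h'
            · exact Or.inr h0
            · exact Or.inl (le_of_eq (clamp_of_mem h' h).symm)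
          rcases this with h' | _
          · calc 1 - clamp y ≤ 1 - y := by linarith
              _ ≤ |y - 1| := by rw [abs_sub_comm]; exact le_abs_self _
          · have hy0 : clamp y = max 0 y := by
              rcases le_total y 0 with h'' | h''
              · rw [clamp_of_nonpos h'', max_eq_left h'']
              · rw [clamp_of_mem h'' h, max_eq_right h'']
            have : y ≤ clamp y := by rw [hy0]; exact le_max_right _ _
            calc 1 - clamp y ≤ 1 - y := by linarith
              _ ≤ |y - 1| := by rw [abs_sub_comm]; exact le_abs_self _
      have hble : |Gg y - Gg 1 - (y - 1) * (2 * 1 * (1 - 1))| ≤ |y-1| * |y-1| := by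
        rw [hG1]
        have : Gg y - 1/3 = -((1 - clamp y)^2 * (2*clamp y + 1)/3) := by
          simp only [Gg]; ring
        rw [show (y - 1) * (2 * 1 * (1 - 1)) = 0 by ring, sub_zero, this, abs_neg]
        have hnn : 0 ≤ (1 - clamp y)^2 * (2*clamp y + 1)/3 := by positivity
        rw [abs_of_nonneg hnn]
        nlinarith [abs_nonneg (y-1)]
      rw [Real.norm_eq_abs, Real.norm_eq_abs]
      calc |Gg y - Gg 1 - (y - 1) • (2 * 1 * (1 - 1))| = |Gg y - Gg 1 - (y - 1) * (2 * 1 * (1 - 1))| := by norm_num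
        _ ≤ |y-1| * |y-1| := hble
        _ ≤ ε * |y - 1| := by nlinarith [abs_nonneg (y-1)]
    · have hev : (fun _ : ℝ => (1:ℝ)/3) =ᶠ[nhds x] Gg := by
        filter_upwards [Ioi_mem_nhds hx1] with y hy
        simp [Gg, clamp_of_one_le (le_of_lt hy)]; norm_num
      rw [clamp_of_one_le hx1.le]
      simpa using (hasDerivAt_const x ((1:ℝ)/3)).congr_of_eventuallyEq hev.symm



lemma integral_clamp (u v : ℝ) (hv : v ≠ 0) :
    ∫ t in Icc (0:ℝ) 1, 2 * clamp (u + v*t) * (1 - clamp (u + v*t)) =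
      (Gg (u + v) - Gg u) / v := by
  rw [MeasureTheory.integral_Icc_eq_integral_Ioc, ← intervalIntegral.integral_of_le zero_le_one]
  have key : ∀ t ∈ uIcc (0:ℝ) 1,
      HasDerivAt (fun t => Gg (u + v*t) / v) (2 * clamp (u + v*t) * (1 - clamp (u + v*t))) t := by
    intro t _
    have h1 : HasDerivAt (fun t : ℝ => u + v*t) v t := by
      simpa using ((hasDerivAt_id t).const_mul v).const_add u
    have h2 := ((hasDerivAt_Gg (u + v*t)).comp t h1).div_const v
    exact h2.congr_deriv (by field_simp)
  have hcont : Continuous (fun t : ℝ => 2 * clamp (u + v*t) * (1 - clamp (u + v*t))) := by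
    have h : Continuous (fun t : ℝ => u + v*t) := by continuity
    exact (continuous_const.mul (continuous_clamp.comp h)).mul
      (continuous_const.sub (continuous_clamp.comp h))
  rw [intervalIntegral.integral_eq_sub_of_hasDerivAt key (hcont.intervalIntegrable 0 1)]
  norm_num
  ring

lemma step_ge (r : ℝ) : ∫ s in Icc (0:ℝ) 1, (if r ≤ s then (1:ℝ) else 0) = clamp (1 - r) := by
  have h : ∀ s : ℝ, (if r ≤ s then (1:ℝ) else 0) = Set.indicator (Ici r) (fun _ => (1:ℝ)) s := by
    intro s; simp [Set.indicator_apply]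
  simp_rw [h]
  have hset : Icc (0:ℝ) 1 ∩ Ici r = Icc (max 0 r) 1 := by
    ext x; simp only [mem_inter_iff, mem_Icc, mem_Ici, max_le_iff]; tauto
  rw [MeasureTheory.setIntegral_indicator measurableSet_Ici, setIntegral_const,
      hset, Real.volume_real_Icc, smul_eq_mul, mul_one]
  rcases le_total r 0 with h0 | h0 <;> rcases le_total r 1 with h1 | h1 <;>
    simp [clamp, max_def, min_def] <;> split_ifs <;> linarith

lemma step_le (r : ℝ) : ∫ t in Icc (0:ℝ) 1, (if t ≤ r then (1:ℝ) else 0) = clamp r := by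
  have h : ∀ t : ℝ, (if t ≤ r then (1:ℝ) else 0) = Set.indicator (Iic r) (fun _ => (1:ℝ)) t := by
    intro t; simp [Set.indicator_apply]
  simp_rw [h]
  have hset : Icc (0:ℝ) 1 ∩ Iic r = Icc 0 (min 1 r) := by
    ext x; simp only [mem_inter_iff, mem_Icc, mem_Iic, le_min_iff]; tauto
  rw [MeasureTheory.setIntegral_indicator measurableSet_Iic, setIntegral_const,
      hset, Real.volume_real_Icc, smul_eq_mul, mul_one]
  rcases le_total r 0 with h0 | h0 <;> rcases le_total r 1 with h1 | h1 <;>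
    simp [clamp, max_def, min_def] <;> split_ifs <;> linarith

lemma cube_preimage :
    (MeasurableEquiv.finTwoArrow.symm : ℝ × ℝ → (Fin 2 → ℝ)) ⁻¹' unitCube 2 =
      Icc (0:ℝ) 1 ×ˢ Icc (0:ℝ) 1 := by
  ext p
  simp [unitCube, MeasurableEquiv.finTwoArrow, Set.mem_pi, Fin.forall_fin_two, Pi.le_def,
    Prod.le_def]

lemma integral_cube (F : (Fin 2 → ℝ) → ℝ) :
    ∫ x in unitCube 2, F x = ∫ p in Icc (0:ℝ) 1 ×ˢ Icc (0:ℝ) 1, F ![p.1, p.2] := by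
  rw [← ((volume_preserving_finTwoArrow ℝ).symm _).setIntegral_preimage_emb
      (MeasurableEquiv.measurableEmbedding _) F (unitCube 2), cube_preimage]
  congr 1

lemma integral_prod_swap_Icc (g : ℝ × ℝ → ℝ) :
    ∫ z in Icc (0:ℝ) 1 ×ˢ Icc (0:ℝ) 1, g z = ∫ z in Icc (0:ℝ) 1 ×ˢ Icc (0:ℝ) 1, g z.swap := by
  have := (Measure.measurePreserving_swap (μ := (volume : Measure ℝ))
      (ν := (volume : Measure ℝ))).setIntegral_preimage_emb
      (MeasurableEquiv.prodComm.measurableEmbedding) g (Icc (0:ℝ) 1 ×ˢ Icc (0:ℝ) 1)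
  rw [Measure.volume_eq_prod, ← this, Set.preimage_swap_prod]

-- finiteness of the restricted measure
instance fin_restrict_I : IsFiniteMeasure ((volume : Measure ℝ).restrict (Icc (0:ℝ) 1)) :=
  ⟨by rw [Measure.restrict_apply_univ]; simp [Real.volume_Icc]⟩

lemma volume_I : (volume : Measure ℝ).real (Icc (0:ℝ) 1) = 1 := by
  simp [Real.volume_real_Icc]

-- measurability of the step function composed with measurable maps
lemma meas_step {X : Type*} [MeasurableSpace X] {g : X → ℝ} (hg : Measurable g) (q : ℝ) :
    Measurable (fun x => if q ≤ g x then (1:ℝ) else 0) :=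
  Measurable.ite (measurableSet_le measurable_const hg) measurable_const measurable_const

lemma integrableOn_step {g : ℝ → ℝ} (hg : Measurable g) (q : ℝ) :
    IntegrableOn (fun s => if q ≤ g s then (1:ℝ) else 0) (Icc (0:ℝ) 1) := by
  apply Measure.integrableOn_of_bounded (M := 1) (by simp [Real.volume_Icc])
    (meas_step hg q).aestronglyMeasurable
  refine ae_of_all _ fun s => ?_
  split_ifs <;> simp

lemma integrableOn_one : IntegrableOn (fun _ : ℝ => (1:ℝ)) (Icc (0:ℝ) 1) := by
  exact integrableOn_const (by simp [Real.volume_Icc])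

section Chi

variable (w : Fin 2 → ℝ) (q : ℝ)

lemma chi0_eq (h1 : 0 < w 0) (h2 : w 1 ≠ 0) :
    chiLin w q 0 =
      (Gg ((w 0 - q)/w 0 + w 1/w 0) - Gg ((w 0 - q)/w 0)) / (w 1/w 0) := by
  set a := w 0 with ha
  set c := w 1 with hc
  set I := Icc (0:ℝ) 1 with hI
  set S : ℝ → ℝ := fun t => clamp (1 - (q - c*t)/a) with hS
  have hSm : Measurable S := by
    apply continuous_clamp.measurable.comp
    fun_prop
  have hS0 : ∀ t, 0 ≤ S t := fun t => clamp_nonneg _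
  have hS1 : ∀ t, S t ≤ 1 := fun t => clamp_le_one _
  -- step 0 : pointwise description of the integrand
  have hpt : ∀ (b : ℝ) (x : Fin 2 → ℝ),
      |linClass w q (Function.update x 0 b) - linClass w q x| =
      |(if q ≤ a*b + c*(x 1) then (1:ℝ) else 0) - (if q ≤ a*(x 0) + c*(x 1) then (1:ℝ) else 0)| := by
    intro b x
    unfold linClass
    rw [Fin.sum_univ_two, Fin.sum_univ_two]
    simp [Function.update_self, Function.update_of_ne (show (1:Fin 2) ≠ 0 by decide)]
    rfl
  -- the 1-dim integral of the step function in the first slot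
  have hfs : ∀ t s : ℝ, (if q ≤ a*s + c*t then (1:ℝ) else 0) = (if (q - c*t)/a ≤ s then (1:ℝ) else 0) := by
    intro t s
    refine if_congr ?_ rfl rfl
    rw [div_le_iff₀ h1]
    constructor <;> intro <;> nlinarith
  have hSint : ∀ t : ℝ, ∫ s in I, (if q ≤ a*s + c*t then (1:ℝ) else 0) = S t := by
    intro t
    simp_rw [hfs t]
    exact step_ge _
  -- inner integral over the replaced coordinate
  have hinner : ∀ b t : ℝ,
      (∫ s in I, |(if q ≤ a*b + c*t then (1:ℝ) else 0) - (if q ≤ a*s + c*t then (1:ℝ) else 0)|)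
      = (if q ≤ a*b + c*t then (1:ℝ) else 0) * (1 - S t)
        + (1 - if q ≤ a*b + c*t then (1:ℝ) else 0) * S t := by
    intro b t
    have hint : IntegrableOn (fun s => if q ≤ a*s + c*t then (1:ℝ) else 0) I := by
      apply integrableOn_step; fun_prop
    by_cases hb : q ≤ a*b + c*t
    · rw [if_pos hb]
      have habs : ∀ s : ℝ, |(1:ℝ) - (if q ≤ a*s + c*t then (1:ℝ) else 0)|
          = 1 - (if q ≤ a*s + c*t then (1:ℝ) else 0) := by
        intro s; split_ifs <;> norm_num
      simp_rw [habs]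
      rw [integral_sub integrableOn_one hint, hSint t]
      rw [setIntegral_const, smul_eq_mul, mul_one, volume_I]
      ring
    · rw [if_neg hb]
      have habs : ∀ s : ℝ, |(0:ℝ) - (if q ≤ a*s + c*t then (1:ℝ) else 0)|
          = (if q ≤ a*s + c*t then (1:ℝ) else 0) := by
        intro s; split_ifs <;> norm_num
      simp_rw [habs]
      rw [hSint t]
      ring
  -- main calculation
  have step1 : chiLin w q 0 = ∫ b in I, ∫ t in I,
      ((if q ≤ a*b + c*t then (1:ℝ) else 0) * (1 - S t)
        + (1 - if q ≤ a*b + c*t then (1:ℝ) else 0) * S t) := by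
    unfold chiLin
    simp only [hpt]
    have hcube : ∀ b : ℝ, (∫ x in unitCube 2,
        |(if q ≤ a*b + c*(x 1) then (1:ℝ) else 0) - (if q ≤ a*(x 0) + c*(x 1) then (1:ℝ) else 0)|)
        = ∫ t in I, ∫ s in I,
          |(if q ≤ a*b + c*t then (1:ℝ) else 0) - (if q ≤ a*s + c*t then (1:ℝ) else 0)| := by
      intro b
      rw [integral_cube (fun x =>
        |(if q ≤ a*b + c*(x 1) then (1:ℝ) else 0) - (if q ≤ a*(x 0) + c*(x 1) then (1:ℝ) else 0)|)]
      simp only [Matrix.cons_val_zero, Matrix.cons_val_one, Matrix.head_cons]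
      rw [integral_prod_swap_Icc]
      simp only [Prod.fst_swap, Prod.snd_swap]
      rw [Measure.volume_eq_prod]
      rw [setIntegral_prod]
      · rfl
      apply Measure.integrableOn_of_bounded (M := 1)
      · rw [Measure.prod_prod]
        simp [hI, Real.volume_Icc]
      · apply Measurable.aestronglyMeasurable
        apply Measurable.abs
        apply Measurable.sub
        · exact meas_step (by fun_prop) q
        · exact meas_step (by fun_prop) q
      · refine ae_of_all _ fun z => ?_
        rw [Real.norm_eq_abs, abs_abs]
        by_cases e₁ : q ≤ a * b + c * z.1 <;> by_cases e₂ : q ≤ a * z.2 + c * z.1 <;> simp [e₁, e₂]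
    simp only [hcube]
    congr 1
    ext b
    congr 1
    ext t
    exact hinner b t
  rw [step1]
  -- swap the two integrals
  have G_meas : Measurable (Function.uncurry (fun b t =>
      (if q ≤ a*b + c*t then (1:ℝ) else 0) * (1 - S t)
        + (1 - if q ≤ a*b + c*t then (1:ℝ) else 0) * S t)) := by
    have h1m : Measurable (fun z : ℝ × ℝ => if q ≤ a*z.1 + c*z.2 then (1:ℝ) else 0) :=
      meas_step (by fun_prop) q
    have h2m : Measurable (fun z : ℝ × ℝ => S z.2) := hSm.comp measurable_snd
    exact (h1m.mul (measurable_const.sub h2m)).add ((measurable_const.sub h1m).mul h2m)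
  have G_int : Integrable (Function.uncurry (fun b t =>
      (if q ≤ a*b + c*t then (1:ℝ) else 0) * (1 - S t)
        + (1 - if q ≤ a*b + c*t then (1:ℝ) else 0) * S t))
      (((volume : Measure ℝ).restrict I).prod ((volume : Measure ℝ).restrict I)) := by
    refine ⟨G_meas.aestronglyMeasurable, ?_⟩
    apply HasFiniteIntegral.of_bounded (C := 1)
    refine ae_of_all _ fun z => ?_
    simp only [Function.uncurry]
    have := hS0 z.2; have := hS1 z.2
    split_ifs <;> rw [Real.norm_eq_abs, abs_le] <;> constructor <;> nlinarith
  rw [integral_integral_swap G_int]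
  -- compute the inner integral over b
  have hbint : ∀ t : ℝ, (∫ b in I,
      ((if q ≤ a*b + c*t then (1:ℝ) else 0) * (1 - S t)
        + (1 - if q ≤ a*b + c*t then (1:ℝ) else 0) * S t))
      = 2 * clamp ((a - q)/a + (c/a)*t) * (1 - clamp ((a - q)/a + (c/a)*t)) := by
    intro t
    have hrw : ∀ b : ℝ, (if q ≤ a*b + c*t then (1:ℝ) else 0) * (1 - S t)
        + (1 - if q ≤ a*b + c*t then (1:ℝ) else 0) * S t
        = (if q ≤ a*b + c*t then (1:ℝ) else 0) * (1 - 2 * S t) + S t := by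
      intro b; ring
    simp_rw [hrw]
    have hint : IntegrableOn (fun b => if q ≤ a*b + c*t then (1:ℝ) else 0) I := by
      apply integrableOn_step; fun_prop
    rw [integral_add (hint.mul_const _) (integrableOn_const (by simp [hI, Real.volume_Icc]))]
    rw [integral_mul_const, hSint t, setIntegral_const, smul_eq_mul, volume_I]
    have harg : (a - q)/a + (c/a)*t = 1 - (q - c*t)/a := by field_simp; ring
    rw [harg]
    simp only [hS]
    ring
  simp_rw [hbint]
  exact integral_clamp ((a - q)/a) (c/a) (div_ne_zero h2 h1.ne')

lemma chi1_eq (h1 : w 0 ≠ 0) (h2 : w 1 < 0) :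
    chiLin w q 1 =
      (Gg (q/w 1 + -w 0/w 1) - Gg (q/w 1)) / (-w 0/w 1) := by
  set a := w 0 with ha
  set c := w 1 with hc
  set I := Icc (0:ℝ) 1 with hI
  set T : ℝ → ℝ := fun s => clamp ((q - a*s)/c) with hT
  have hTm : Measurable T := by
    apply continuous_clamp.measurable.comp
    fun_prop
  have hT0 : ∀ s, 0 ≤ T s := fun s => clamp_nonneg _
  have hT1 : ∀ s, T s ≤ 1 := fun s => clamp_le_one _
  have hpt : ∀ (b : ℝ) (x : Fin 2 → ℝ),
      |linClass w q (Function.update x 1 b) - linClass w q x| =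
      |(if q ≤ a*(x 0) + c*b then (1:ℝ) else 0) - (if q ≤ a*(x 0) + c*(x 1) then (1:ℝ) else 0)| := by
    intro b x
    unfold linClass
    rw [Fin.sum_univ_two, Fin.sum_univ_two]
    simp [Function.update_self, Function.update_of_ne (show (0:Fin 2) ≠ 1 by decide)]
    rfl
  have hfs : ∀ s t : ℝ, (if q ≤ a*s + c*t then (1:ℝ) else 0) = (if t ≤ (q - a*s)/c then (1:ℝ) else 0) := by
    intro s t
    refine if_congr ?_ rfl rfl
    rw [le_div_iff_of_neg h2]
    constructor <;> intro <;> nlinarith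
  have hTint : ∀ s : ℝ, ∫ t in I, (if q ≤ a*s + c*t then (1:ℝ) else 0) = T s := by
    intro s
    simp_rw [hfs s]
    exact step_le _
  have hinner : ∀ b s : ℝ,
      (∫ t in I, |(if q ≤ a*s + c*b then (1:ℝ) else 0) - (if q ≤ a*s + c*t then (1:ℝ) else 0)|)
      = (if q ≤ a*s + c*b then (1:ℝ) else 0) * (1 - T s)
        + (1 - if q ≤ a*s + c*b then (1:ℝ) else 0) * T s := by
    intro b s
    have hint : IntegrableOn (fun t => if q ≤ a*s + c*t then (1:ℝ) else 0) I := by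
      apply integrableOn_step; fun_prop
    by_cases hb : q ≤ a*s + c*b
    · rw [if_pos hb]
      have habs : ∀ t : ℝ, |(1:ℝ) - (if q ≤ a*s + c*t then (1:ℝ) else 0)|
          = 1 - (if q ≤ a*s + c*t then (1:ℝ) else 0) := by
        intro t; split_ifs <;> norm_num
      simp_rw [habs]
      rw [integral_sub integrableOn_one hint, hTint s]
      rw [setIntegral_const, smul_eq_mul, mul_one, volume_I]
      ring
    · rw [if_neg hb]
      have habs : ∀ t : ℝ, |(0:ℝ) - (if q ≤ a*s + c*t then (1:ℝ) else 0)|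
          = (if q ≤ a*s + c*t then (1:ℝ) else 0) := by
        intro t; split_ifs <;> norm_num
      simp_rw [habs]
      rw [hTint s]
      ring
  have step1 : chiLin w q 1 = ∫ b in I, ∫ s in I,
      ((if q ≤ a*s + c*b then (1:ℝ) else 0) * (1 - T s)
        + (1 - if q ≤ a*s + c*b then (1:ℝ) else 0) * T s) := by
    unfold chiLin
    simp only [hpt]
    have hcube : ∀ b : ℝ, (∫ x in unitCube 2,
        |(if q ≤ a*(x 0) + c*b then (1:ℝ) else 0) - (if q ≤ a*(x 0) + c*(x 1) then (1:ℝ) else 0)|)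
        = ∫ s in I, ∫ t in I,
          |(if q ≤ a*s + c*b then (1:ℝ) else 0) - (if q ≤ a*s + c*t then (1:ℝ) else 0)| := by
      intro b
      rw [integral_cube (fun x =>
        |(if q ≤ a*(x 0) + c*b then (1:ℝ) else 0) - (if q ≤ a*(x 0) + c*(x 1) then (1:ℝ) else 0)|)]
      simp only [Matrix.cons_val_zero, Matrix.cons_val_one, Matrix.head_cons]
      rw [Measure.volume_eq_prod]
      rw [setIntegral_prod]
      · rfl
      apply Measure.integrableOn_of_bounded (M := 1)
      · rw [Measure.prod_prod]
        simp [hI, Real.volume_Icc]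
      · apply Measurable.aestronglyMeasurable
        apply Measurable.abs
        apply Measurable.sub
        · exact meas_step (by fun_prop) q
        · exact meas_step (by fun_prop) q
      · refine ae_of_all _ fun z => ?_
        rw [Real.norm_eq_abs, abs_abs]
        by_cases e₁ : q ≤ a * z.1 + c * b <;> by_cases e₂ : q ≤ a * z.1 + c * z.2 <;> simp [e₁, e₂]
    simp only [hcube]
    congr 1
    ext b
    congr 1
    ext s
    exact hinner b s
  rw [step1]
  have G_meas : Measurable (Function.uncurry (fun b s =>
      (if q ≤ a*s + c*b then (1:ℝ) else 0) * (1 - T s)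
        + (1 - if q ≤ a*s + c*b then (1:ℝ) else 0) * T s)) := by
    have h1m : Measurable (fun z : ℝ × ℝ => if q ≤ a*z.2 + c*z.1 then (1:ℝ) else 0) :=
      meas_step (by fun_prop) q
    have h2m : Measurable (fun z : ℝ × ℝ => T z.2) := hTm.comp measurable_snd
    exact (h1m.mul (measurable_const.sub h2m)).add ((measurable_const.sub h1m).mul h2m)
  have G_int : Integrable (Function.uncurry (fun b s =>
      (if q ≤ a*s + c*b then (1:ℝ) else 0) * (1 - T s)
        + (1 - if q ≤ a*s + c*b then (1:ℝ) else 0) * T s))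
      (((volume : Measure ℝ).restrict I).prod ((volume : Measure ℝ).restrict I)) := by
    refine ⟨G_meas.aestronglyMeasurable, ?_⟩
    apply HasFiniteIntegral.of_bounded (C := 1)
    refine ae_of_all _ fun z => ?_
    simp only [Function.uncurry]
    have := hT0 z.2; have := hT1 z.2
    split_ifs <;> rw [Real.norm_eq_abs, abs_le] <;> constructor <;> nlinarith
  rw [integral_integral_swap G_int]
  have hbint : ∀ s : ℝ, (∫ b in I,
      ((if q ≤ a*s + c*b then (1:ℝ) else 0) * (1 - T s)
        + (1 - if q ≤ a*s + c*b then (1:ℝ) else 0) * T s))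
      = 2 * clamp (q/c + (-a/c)*s) * (1 - clamp (q/c + (-a/c)*s)) := by
    intro s
    have hrw : ∀ b : ℝ, (if q ≤ a*s + c*b then (1:ℝ) else 0) * (1 - T s)
        + (1 - if q ≤ a*s + c*b then (1:ℝ) else 0) * T s
        = (if q ≤ a*s + c*b then (1:ℝ) else 0) * (1 - 2 * T s) + T s := by
      intro b; ring
    simp_rw [hrw]
    have hint : IntegrableOn (fun b => if q ≤ a*s + c*b then (1:ℝ) else 0) I := by
      apply integrableOn_step; fun_prop
    rw [integral_add (hint.mul_const _) (integrableOn_const (by simp [hI, Real.volume_Icc]))]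
    have hbstep : ∫ b in I, (if q ≤ a*s + c*b then (1:ℝ) else 0) = T s := by
      simp_rw [hfs s]
      exact step_le _
    rw [integral_mul_const, hbstep, setIntegral_const, smul_eq_mul, volume_I]
    have harg : q/c + (-a/c)*s = (q - a*s)/c := by field_simp; ring
    rw [harg]
    simp only [hT]
    ring
  simp_rw [hbint]
  exact integral_clamp (q/c) (-a/c) (div_ne_zero (neg_ne_zero.mpr h1) h2.ne)



end Chi

lemma Gg_of_nonpos {x : ℝ} (h : x ≤ 0) : Gg x = 0 := by
  rw [Gg, clamp_of_nonpos h]; norm_num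
lemma Gg_of_mem {x : ℝ} (h0 : 0 ≤ x) (h1 : x ≤ 1) : Gg x = x^2 - 2/3*x^3 := by
  rw [Gg, clamp_of_mem h0 h1]
lemma Gg_of_one_le {x : ℝ} (h : 1 ≤ x) : Gg x = 1/3 := by
  rw [Gg, clamp_of_one_le h]; norm_num

lemma final_compare (a c q : ℝ) (ha : 0 < a) (hc : c < 0) (hq1 : c < q) (hq2 : q < a) :
    ((Gg ((a - q)/a + c/a) - Gg ((a - q)/a)) / (c/a) >
      (Gg (q/c + -a/c) - Gg (q/c)) / (-a/c)) ↔ -c < a := by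
  have ha' : a ≠ 0 := ha.ne'
  have hc' : c ≠ 0 := hc.ne
  have e1 : (a - q)/a + c/a = (a - q + c)/a := by rw [← add_div]
  have e2 : q/c + -a/c = (q - a)/c := by rw [← add_div]; ring_nf
  rw [e1, e2, gt_iff_lt, ← sub_pos]
  rcases le_total 0 q with hq0 | hq0 <;> rcases le_total q (a + c) with hqac | hqac
  · -- Case C : 0 ≤ q ≤ a + c
    rw [Gg_of_mem (div_nonneg (by linarith) ha.le) ((div_le_one ha).mpr (by linarith)),
        Gg_of_mem (div_nonneg (by linarith) ha.le) ((div_le_one ha).mpr (by linarith)),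
        Gg_of_one_le (by rw [le_div_iff_of_neg hc]; linarith),
        Gg_of_nonpos (div_nonpos_of_nonneg_of_nonpos hq0 hc.le)]
    have key : ((((a - q + c)/a)^2 - 2/3*((a - q + c)/a)^3) - (((a - q)/a)^2 - 2/3*((a - q)/a)^3)) / (c/a)
        - (1/3 - 0) / (-a/c)
        = (2/3*(-c)*(a + c) + 2*(a + c - q)*q) / a^2 := by
      field_simp
      ring
    rw [key]
    constructor
    · intro h
      by_contra hac
      push_neg at hac
      have hac' : a + c ≤ 0 := by linarith
      have hq00 : q = 0 := le_antisymm (by linarith) hq0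
      have hN : 2/3*(-c)*(a + c) + 2*(a + c - q)*q ≤ 0 := by rw [hq00]; nlinarith
      have : (2/3*(-c)*(a + c) + 2*(a + c - q)*q) / a^2 ≤ 0 :=
        div_nonpos_of_nonpos_of_nonneg hN (sq_nonneg a)
      linarith
    · intro h
      apply div_pos _ (by positivity)
      nlinarith
  · -- Case A : 0 ≤ q, a + c ≤ q
    rw [Gg_of_nonpos (div_nonpos_of_nonpos_of_nonneg (by linarith) ha.le),
        Gg_of_mem (div_nonneg (by linarith) ha.le) ((div_le_one ha).mpr (by linarith)),
        Gg_of_mem (by rw [le_div_iff_of_neg hc]; linarith)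
          (by rw [div_le_iff_of_neg hc]; linarith),
        Gg_of_nonpos (div_nonpos_of_nonneg_of_nonpos hq0 hc.le)]
    have key : (0 - (((a - q)/a)^2 - 2/3*((a - q)/a)^3)) / (c/a)
        - ((((q - a)/c)^2 - 2/3*((q - a)/c)^3) - 0) / (-a/c)
        = (2/3*(a - q)^3/(a^2*c^2)) * (a + c) := by
      field_simp
      ring
    rw [key]
    have hk : 0 < 2/3*(a - q)^3/(a^2*c^2) := by
      have : 0 < a - q := by linarith
      positivity
    constructor
    · intro h
      by_contra hac
      push_neg at hac
      nlinarith
    · intro h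
      exact mul_pos hk (by linarith)
  · -- Case B : q ≤ 0, q ≤ a + c
    rw [Gg_of_mem (div_nonneg (by linarith) ha.le) ((div_le_one ha).mpr (by linarith)),
        Gg_of_one_le ((one_le_div ha).mpr (by linarith)),
        Gg_of_one_le (by rw [le_div_iff_of_neg hc]; linarith),
        Gg_of_mem (by rw [le_div_iff_of_neg hc]; linarith)
          (by rw [div_le_iff_of_neg hc]; linarith)]
    have key : ((((a - q + c)/a)^2 - 2/3*((a - q + c)/a)^3) - 1/3) / (c/a)
        - (1/3 - ((q/c)^2 - 2/3*(q/c)^3)) / (-a/c)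
        = (2/3*(q - c)^3/(a^2*c^2)) * (a + c) := by
      field_simp
      ring
    rw [key]
    have hk : 0 < 2/3*(q - c)^3/(a^2*c^2) := by
      have : 0 < q - c := by linarith
      positivity
    constructor
    · intro h
      by_contra hac
      push_neg at hac
      nlinarith
    · intro h
      exact mul_pos hk (by linarith)
  · -- Case D : q ≤ 0, a + c ≤ q
    rw [Gg_of_nonpos (div_nonpos_of_nonpos_of_nonneg (by linarith) ha.le),
        Gg_of_one_le ((one_le_div ha).mpr (by linarith)),
        Gg_of_mem (by rw [le_div_iff_of_neg hc]; linarith)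
          (by rw [div_le_iff_of_neg hc]; linarith),
        Gg_of_mem (by rw [le_div_iff_of_neg hc]; linarith)
          (by rw [div_le_iff_of_neg hc]; linarith)]
    have key : (0 - 1/3) / (c/a)
        - ((((q - a)/c)^2 - 2/3*((q - a)/c)^3) - ((q/c)^2 - 2/3*(q/c)^3)) / (-a/c)
        = (2/3*a*(a + c) + 2*(q - (a + c))*q) / c^2 := by
      field_simp
      ring
    rw [key]
    constructor
    · intro h
      exfalso
      have hN : 2/3*a*(a + c) + 2*(q - (a + c))*q ≤ 0 := by nlinarith
      have : (2/3*a*(a + c) + 2*(q - (a + c))*q) / c^2 ≤ 0 :=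
        div_nonpos_of_nonpos_of_nonneg hN (sq_nonneg c)
      linarith
    · intro h
      linarith

/-- For a two-feature linear classifier with w_1 > 0 > w_2 and
w_2 < q < w_1, feature 1 is strictly more influential than feature 2 iff
|w_1| > |w_2|. -/
theorem chiLin_two_features_mixed_signs
    (w : Fin 2 → ℝ) (q : ℝ)
    (h1 : 0 < w 0) (h2 : w 1 < 0)
    (hq1 : w 1 < q) (hq2 : q < w 0) :
    chiLin w q 0 > chiLin w q 1 ↔ |w 0| > |w 1| := by
  rw [chi0_eq w q h1 h2.ne, chi1_eq w q h1.ne' h2, abs_of_pos h1, abs_of_neg h2]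
  exact final_compare (w 0) (w 1) q h1 h2 hq1 hq2
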